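/- With b^{(l)}_{w₁-1,i} defined as above and assuming w₁α₁ + β₁ + 1 > α₂, for each fixed i ≥ 1 we have ∑_{l=i}^∞ b^{(l)}_{w₁-1,i}·(l + β₂/α₂) = ((w₁-1)α₁+β₁)/(w₁α₁+β₁+1−α₂) · (i + β₂/α₂). -/

import Mathlib

open Real Filter

lemma gamma_tail_tendsto_zero (c d t : ℝ) (hc : 0 < c) (hd : 1 + c < d) (ht : 0 < t) :
    Tendsto (fun n : ℕ => Real.Gamma (t + n + 1 + c) / Real.Gamma (t + n + d))
      atTop (nhds 0) := by
  have hd0 : (0:ℝ) < d := by linarith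
  set δ := d - c - 1 with hδdef
  have hδ : 0 < δ := by simp only [hδdef]; linarith
  set G : ℕ → ℝ := fun n => Real.Gamma (t + n + 1 + c) / Real.Gamma (t + n + d) with hG
  have hGpos : ∀ n, 0 < G n := fun n => by
    apply div_pos <;> apply Real.Gamma_pos_of_pos <;> positivity
  have hrec : ∀ n : ℕ, G (n + 1) = G n * (1 - δ / (t + n + d)) := by
    intro n
    have h1 : t + (n:ℝ) + d > 0 := by positivity
    have h2 : t + (n:ℝ) + 1 + c > 0 := by positivity
    have e1 : Real.Gamma (t + (n+1:ℕ) + 1 + c) = (t + n + 1 + c) * Real.Gamma (t + n + 1 + c) := by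
      rw [show (t + ((n:ℕ)+1:ℕ) + 1 + c : ℝ) = (t + n + 1 + c) + 1 by push_cast; ring,
        Real.Gamma_add_one (by linarith)]
    have e2 : Real.Gamma (t + (n+1:ℕ) + d) = (t + n + d) * Real.Gamma (t + n + d) := by
      rw [show (t + ((n:ℕ)+1:ℕ) + d : ℝ) = (t + n + d) + 1 by push_cast; ring,
        Real.Gamma_add_one (by linarith)]
    have hg1 := (Real.Gamma_pos_of_pos h1).ne'
    have hg2 := (Real.Gamma_pos_of_pos h2).ne'
    simp only [hG, e1, e2, hδdef]
    field_simp
    ring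
  set S : ℕ → ℝ := fun n => ∑ j ∈ Finset.range n, 1 / (t + j + d) with hS
  have hSsucc : ∀ n : ℕ, S (n+1) = S n + 1 / (t + n + d) := fun n =>
    Finset.sum_range_succ _ n
  have hbound : ∀ n, G n ≤ G 0 * Real.exp (-δ * S n) := by
    intro n
    induction n with
    | zero => simp [hS]
    | succ n ih =>
      have h1 : (0:ℝ) < t + n + d := by positivity
      have hfrac : δ / (t + n + d) < 1 := by
        rw [div_lt_one h1]; simp only [hδdef]; linarith
      have hr0 : 0 ≤ 1 - δ / (t + n + d) := by linarith
      have hrexp : 1 - δ / (t + n + d) ≤ Real.exp (-(δ / (t + n + d))) := by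
        have := Real.add_one_le_exp (-(δ / (t + n + d))); linarith
      calc G (n+1) = G n * (1 - δ / (t + n + d)) := hrec n
        _ ≤ (G 0 * Real.exp (-δ * S n)) * Real.exp (-(δ / (t + n + d))) := by
            apply mul_le_mul ih hrexp hr0
              (mul_nonneg (hGpos 0).le (Real.exp_nonneg _))
        _ = G 0 * Real.exp (-δ * S (n+1)) := by
            rw [mul_assoc, ← Real.exp_add, hSsucc n]; ring_nf
  have hSdiv : Tendsto S atTop atTop := by
    have hM : (0:ℝ) < t + d := by linarith
    have hle : ∀ n, (1 / (t + d)) * (∑ j ∈ Finset.range n, 1 / ((j:ℝ) + 1)) ≤ S n := by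
      intro n
      rw [Finset.mul_sum]
      apply Finset.sum_le_sum
      intro j _
      rw [mul_one_div, div_div]
      apply one_div_le_one_div_of_le (by positivity)
      have hj : (0:ℝ) ≤ (j:ℝ) := Nat.cast_nonneg j
      nlinarith
    apply tendsto_atTop_mono hle
    exact Real.tendsto_sum_range_one_div_nat_succ_atTop.const_mul_atTop (by positivity)
  have hexp : Tendsto (fun n => G 0 * Real.exp (-δ * S n)) atTop (nhds 0) := by
    rw [show (0:ℝ) = G 0 * 0 by ring]
    apply Tendsto.const_mul
    apply Real.tendsto_exp_atBot.comp
    have h2 : Tendsto (fun n => δ * S n) atTop atTop := hSdiv.const_mul_atTop hδ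
    exact (tendsto_neg_atTop_atBot.comp h2).congr (fun n => by simp)
  exact squeeze_zero (fun n => (hGpos n).le) hbound hexp

lemma gamma_ratio_hasSum (c d t : ℝ) (hc : 0 < c) (hd : 1 + c < d) (ht : 0 < t)
    (hzero : Tendsto (fun n : ℕ => Real.Gamma (t + n + 1 + c) / Real.Gamma (t + n + d))
      atTop (nhds 0)) :
    HasSum (fun k : ℕ => Real.Gamma (t + k + 1 + c) / Real.Gamma (t + k + 1 + d))
      (Real.Gamma (t + 1 + c) / Real.Gamma (t + d) / (d - c - 1)) := by
  have hd0 : (0:ℝ) < d := by linarith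
  have hδ : 0 < d - c - 1 := by linarith
  set G : ℕ → ℝ := fun n => Real.Gamma (t + n + 1 + c) / Real.Gamma (t + n + d) with hG
  have key : ∀ k : ℕ, Real.Gamma (t + k + 1 + c) / Real.Gamma (t + k + 1 + d)
      = (G k - G (k+1)) / (d - c - 1) := by
    intro k
    have h1 : (0:ℝ) < t + k + d := by positivity
    have h2 : (0:ℝ) < t + k + 1 + c := by positivity
    have e2 : Real.Gamma (t + k + 1 + d) = (t + k + d) * Real.Gamma (t + k + d) := by
      rw [show (t + (k:ℝ) + 1 + d) = (t + k + d) + 1 by ring, Real.Gamma_add_one h1.ne']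
    have e1 : Real.Gamma (t + (k+1:ℕ) + 1 + c) = (t + k + 1 + c) * Real.Gamma (t + k + 1 + c) := by
      rw [show (t + ((k:ℕ)+1:ℕ) + 1 + c : ℝ) = (t + k + 1 + c) + 1 by push_cast; ring,
        Real.Gamma_add_one h2.ne']
    have e3 : (t + ((k:ℕ)+1:ℕ) + d : ℝ) = (t + k + 1 + d) := by push_cast; ring
    have hg1 := (Real.Gamma_pos_of_pos h1).ne'
    have hg2 := (Real.Gamma_pos_of_pos h2).ne'
    simp only [hG, e1, e3, e2]
    field_simp
    ring
  have hpos : ∀ k : ℕ, 0 ≤ Real.Gamma (t + k + 1 + c) / Real.Gamma (t + k + 1 + d) := by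
    intro k
    have h2 : (0:ℝ) < t + k + 1 + c := by positivity
    have h3 : (0:ℝ) < t + k + 1 + d := by positivity
    exact (div_pos (Real.Gamma_pos_of_pos h2) (Real.Gamma_pos_of_pos h3)).le
  rw [hasSum_iff_tendsto_nat_of_nonneg hpos]
  have hps : ∀ n : ℕ, ∑ k ∈ Finset.range n,
      Real.Gamma (t + k + 1 + c) / Real.Gamma (t + k + 1 + d) = (G 0 - G n) / (d - c - 1) := by
    intro n
    rw [Finset.sum_congr rfl (fun k _ => key k), ← Finset.sum_div, Finset.sum_range_sub' G n]
  simp only [hps]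
  have hG0 : G 0 = Real.Gamma (t + 1 + c) / Real.Gamma (t + d) := by simp [hG]
  rw [show Real.Gamma (t + 1 + c) / Real.Gamma (t + d) / (d - c - 1) = (G 0 - 0) / (d - c - 1) by
    rw [hG0, sub_zero]]
  exact ((tendsto_const_nhds.sub hzero).div_const _)

theorem sum_b_coeff_first_moment (α₁ α₂ β₁ β₂ : ℝ) (hα₁ : 0 < α₁) (hα₂ : 0 < α₂)
    (hβ₁ : 0 < β₁) (hβ₂ : 0 < β₂) (w₁ : ℕ) (hw₁ : 1 ≤ w₁)
    (hcond : (w₁ : ℝ) * α₁ + β₁ + 1 > α₂)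
    (i : ℕ) (hi : 1 ≤ i) (b : ℕ → ℝ)
    (hb : ∀ l : ℕ,
      b l = (((w₁ : ℝ) - 1) * α₁ + β₁) / α₂ *
        (Real.Gamma ((l : ℝ) + β₂ / α₂) /
          Real.Gamma ((l : ℝ) + 1 + ((w₁ : ℝ) * α₁ + (β₁ + β₂) + 1) / α₂)) *
        (Real.Gamma ((i : ℝ) + ((w₁ : ℝ) * α₁ + (β₁ + β₂) + 1) / α₂) /
          Real.Gamma ((i : ℝ) + β₂ / α₂))) :
    HasSum (fun k : ℕ => b (i + k) * (((i + k : ℕ) : ℝ) + β₂ / α₂))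
      ((((w₁ : ℝ) - 1) * α₁ + β₁) / ((w₁ : ℝ) * α₁ + β₁ + 1 - α₂) *
        ((i : ℝ) + β₂ / α₂)) := by
  set c : ℝ := β₂ / α₂ with hc_def
  set d : ℝ := ((w₁ : ℝ) * α₁ + (β₁ + β₂) + 1) / α₂ with hd_def
  have hw1 : (1:ℝ) ≤ (w₁:ℝ) := by exact_mod_cast hw₁
  have hc : 0 < c := by positivity
  have hd : 1 + c < d := by
    rw [hc_def, hd_def, show (1:ℝ) + β₂ / α₂ = (α₂ + β₂) / α₂ by field_simp,
      div_lt_div_iff₀ hα₂ hα₂]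
    nlinarith
  have ht : (0:ℝ) < (i:ℝ) := by exact_mod_cast hi
  have hδ : (0:ℝ) < (w₁:ℝ) * α₁ + β₁ + 1 - α₂ := by linarith
  set A : ℝ := ((w₁ : ℝ) - 1) * α₁ + β₁ with hA_def
  set C : ℝ := A / α₂ * (Real.Gamma ((i:ℝ) + d) / Real.Gamma ((i:ℝ) + c)) with hC_def
  have hsum := (gamma_ratio_hasSum c d (i:ℝ) hc hd ht
    (gamma_tail_tendsto_zero c d (i:ℝ) hc hd ht)).mul_left C
  have hgc := (Real.Gamma_pos_of_pos (show (0:ℝ) < (i:ℝ) + c by positivity)).ne'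
  have hgd := (Real.Gamma_pos_of_pos (show (0:ℝ) < (i:ℝ) + d by positivity)).ne'
  have hfun : (fun k : ℕ => b (i + k) * (((i + k : ℕ) : ℝ) + c))
      = fun k : ℕ => C * (Real.Gamma ((i:ℝ) + k + 1 + c) / Real.Gamma ((i:ℝ) + k + 1 + d)) := by
    funext k
    rw [hb (i + k)]
    push_cast
    have hlc : (0:ℝ) < (i:ℝ) + k + c := by positivity
    have e1 : Real.Gamma ((i:ℝ) + (k:ℝ) + 1 + c) = ((i:ℝ) + k + c) * Real.Gamma ((i:ℝ) + k + c) := by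
      rw [show ((i:ℝ) + k + 1 + c) = ((i:ℝ) + k + c) + 1 by ring, Real.Gamma_add_one hlc.ne']
    have hgd2 := (Real.Gamma_pos_of_pos (show (0:ℝ) < (i:ℝ) + k + 1 + d by
      have : (0:ℝ) < d := by linarith
      positivity)).ne'
    have hgc2 := (Real.Gamma_pos_of_pos hlc).ne'
    rw [hC_def, e1]
    field_simp
  have hval : A / ((w₁:ℝ) * α₁ + β₁ + 1 - α₂) * ((i:ℝ) + c)
      = C * (Real.Gamma ((i:ℝ) + 1 + c) / Real.Gamma ((i:ℝ) + d) / (d - c - 1)) := by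
    have e1 : Real.Gamma ((i:ℝ) + 1 + c) = ((i:ℝ) + c) * Real.Gamma ((i:ℝ) + c) := by
      rw [show ((i:ℝ) + 1 + c) = ((i:ℝ) + c) + 1 by ring,
        Real.Gamma_add_one (by positivity : ((i:ℝ) + c) ≠ 0)]
    have edelta : d - c - 1 = ((w₁:ℝ) * α₁ + β₁ + 1 - α₂) / α₂ := by
      rw [hd_def, hc_def]; field_simp; ring
    rw [hC_def, e1, edelta, hA_def]
    field_simp
  rw [show (fun k : ℕ => b (i + k) * (((i + k : ℕ) : ℝ) + c)) = _ from hfun, hval]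
  exact hsum
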